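/- There is no g ∈ G = GL₂(Z) ⋉ Z² mapping the segment e₁ from (1/5,0) to (0,1/5) onto the segment e₃ from (2/5,0) to (1/5,1/5). More generally, no G-map sends any open subsegment of e₁ onto an open subsegment of e₃. -/

import Mathlib

noncomputable section

/-- The lattice `(1/d)ℤ × (1/d)ℤ` inside `ℝ × ℝ`. -/
def Ld (d : ℕ) : Set (ℝ × ℝ) :=
  {p | ∃ a b : ℤ, p = ((a : ℝ) / d, (b : ℝ) / d)}

/-- A `d`-minimal triangle: vertices in `L_d`, not collinear, and the closed triangle
meets `L_d` exactly in its three vertices. -/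
def IsMinimalTriangle (d : ℕ) (p q r : ℝ × ℝ) : Prop :=
  p ∈ Ld d ∧ q ∈ Ld d ∧ r ∈ Ld d ∧
    ¬ Collinear ℝ ({p, q, r} : Set (ℝ × ℝ)) ∧
    convexHull ℝ ({p, q, r} : Set (ℝ × ℝ)) ∩ Ld d = {p, q, r}

/-- An element of `G = GL₂(ℤ) ⋉ ℤ²`: an integer matrix `[[a,b],[c,e]]` of determinant
`±1` together with an integer translation vector `(v1, v2)`. -/
structure GMap where
  a : ℤ
  b : ℤ
  c : ℤ
  e : ℤ
  v1 : ℤ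
  v2 : ℤ
  unimod : a * e - b * c = 1 ∨ a * e - b * c = -1

/-- The affine action `x ↦ Ux + v` of a `GMap` on `ℝ²`. -/
def GMap.app (g : GMap) (p : ℝ × ℝ) : ℝ × ℝ :=
  ((g.a : ℝ) * p.1 + (g.b : ℝ) * p.2 + (g.v1 : ℝ),
   (g.c : ℝ) * p.1 + (g.e : ℝ) * p.2 + (g.v2 : ℝ))

/-- A `d`-minimal segment: endpoints in `L_d`, distinct, and the closed segment meets
`L_d` exactly in its two endpoints. -/
def IsMinimalSegment (d : ℕ) (p q : ℝ × ℝ) : Prop :=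
  p ∈ Ld d ∧ q ∈ Ld d ∧ p ≠ q ∧ segment ℝ p q ∩ Ld d = {p, q}

/-- The point of `L_d` with integer numerator data `p : ℤ × ℤ`. -/
def pt (d : ℕ) (p : ℤ × ℤ) : ℝ × ℝ := ((p.1 : ℝ) / d, (p.2 : ℝ) / d)

/-- Counterclockwise orientation of the ordered triple of numerator data. -/
def ccwZ (p q r : ℤ × ℤ) : Prop :=
  0 < (q.1 - p.1) * (r.2 - p.2) - (q.2 - p.2) * (r.1 - p.1)

/-- Weight (mod `d`) of the oriented minimal segment from `(w/d, x/d)` to `(y/d, z/d)`,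
given by numerator data `(w,x)` and `(y,z)`. -/
def segWeight (d : ℕ) (p q : ℤ × ℤ) : ZMod d :=
  ((p.1 * q.2 - p.2 * q.1 : ℤ) : ZMod d)

/-- The multiset of weights of the three edges `p→q`, `q→r`, `r→p` of a triangle
given by numerator data. -/
def triWeight (d : ℕ) (p q r : ℤ × ℤ) : Multiset (ZMod d) :=
  {segWeight d p q, segWeight d q r, segWeight d r p}

/-- The segment `e₁` from `(1/5, 0)` to `(0, 1/5)`. -/
def e1 : Set (ℝ × ℝ) := segment ℝ (((1 : ℝ) / 5, (0 : ℝ))) ((0, (1 : ℝ) / 5))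

/-- The segment `e₃` from `(2/5, 0)` to `(1/5, 1/5)`. -/
def e3 : Set (ℝ × ℝ) := segment ℝ (((2 : ℝ) / 5, (0 : ℝ))) (((1 : ℝ) / 5, (1 : ℝ) / 5))

lemma e1_sum {x : ℝ × ℝ} (hx : x ∈ e1) : x.1 + x.2 = 1/5 := by
  obtain ⟨u, v, hu, hv, huv, hx⟩ := hx
  subst hx
  simp only [Prod.fst_add, Prod.snd_add, Prod.smul_fst, Prod.smul_snd, smul_eq_mul]
  linarith

lemma e3_sum {x : ℝ × ℝ} (hx : x ∈ e3) : x.1 + x.2 = 2/5 := by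
  obtain ⟨u, v, hu, hv, huv, hx⟩ := hx
  subst hx
  simp only [Prod.fst_add, Prod.snd_add, Prod.smul_fst, Prod.smul_snd, smul_eq_mul]
  linarith

lemma key' (g : GMap) (p q : ℝ × ℝ) (hp : p.1 + p.2 = 1/5) (hq : q.1 + q.2 = 1/5)
    (hpq : p.1 ≠ q.1) (h1 : (g.app p).1 + (g.app p).2 = 2/5)
    (h2 : (g.app q).1 + (g.app q).2 = 2/5) : False := by
  simp only [GMap.app] at h1 h2
  have hzR : ((g.a : ℝ) + g.c - g.b - g.e) * (p.1 - q.1) = 0 := by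
    linear_combination h1 - h2 - ((g.b : ℝ) + g.e) * hp + ((g.b : ℝ) + g.e) * hq
  have hzR' : (g.a : ℝ) + g.c - g.b - g.e = 0 := by
    rcases mul_eq_zero.mp hzR with h | h
    · exact h
    · exact absurd (sub_eq_zero.mp h) hpq
  have hz1 : g.a + g.c = g.b + g.e := by
    have : (g.a : ℝ) + g.c = g.b + g.e := by linarith
    exact_mod_cast this
  have hsR : ((g.b : ℝ) + g.e) + 5 * g.v1 + 5 * g.v2 = 2 := by
    linear_combination 5 * h1 - 5 * p.1 * hzR' - 5 * ((g.b : ℝ) + g.e) * hp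
  have hz2 : g.b + g.e + 5 * g.v1 + 5 * g.v2 = 2 := by exact_mod_cast hsR
  rcases g.unimod with h | h
  · have hm : (g.b + g.e) * (g.a - g.b) = 1 := by linear_combination h + g.b * hz1
    have := Int.isUnit_iff.mp (IsUnit.of_mul_eq_one _ hm)
    omega
  · have hm : (g.b + g.e) * (g.b - g.a) = 1 := by linear_combination -h - g.b * hz1
    have := Int.isUnit_iff.mp (IsUnit.of_mul_eq_one _ hm)
    omega

/-- no `G`-map sends `e₁` onto `e₃`; more generally, no `G`-map sends
any open subsegment of `e₁` onto an open subsegment of `e₃`. -/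
theorem no_G_map_e1_to_e3 :
    (¬ ∃ g : GMap, g.app '' e1 = e3) ∧
    ¬ ∃ (g : GMap) (a b c d : ℝ × ℝ), a ≠ b ∧ c ≠ d ∧
        openSegment ℝ a b ⊆ e1 ∧ openSegment ℝ c d ⊆ e3 ∧
        g.app '' openSegment ℝ a b = openSegment ℝ c d := by
  constructor
  · rintro ⟨g, hg⟩
    have m1 : (((1 : ℝ) / 5, (0 : ℝ))) ∈ e1 := left_mem_segment ℝ _ _
    have m2 : (((0 : ℝ), (1 : ℝ) / 5)) ∈ e1 := right_mem_segment ℝ _ _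
    have h1 : g.app (((1 : ℝ) / 5, (0 : ℝ))) ∈ e3 := hg ▸ Set.mem_image_of_mem _ m1
    have h2 : g.app (((0 : ℝ), (1 : ℝ) / 5)) ∈ e3 := hg ▸ Set.mem_image_of_mem _ m2
    exact key' g _ _ (by norm_num) (by norm_num) (by norm_num) (e3_sum h1) (e3_sum h2)
  · rintro ⟨g, a, b, c, d, hab, hcd, hsub1, hsub3, himg⟩
    set p : ℝ × ℝ := (1/2 : ℝ) • a + (1/2 : ℝ) • b with hpdef
    set q : ℝ × ℝ := (3/4 : ℝ) • a + (1/4 : ℝ) • b with hqdef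
    have hpmem : p ∈ openSegment ℝ a b :=
      ⟨1/2, 1/2, by norm_num, by norm_num, by norm_num, rfl⟩
    have hqmem : q ∈ openSegment ℝ a b :=
      ⟨3/4, 1/4, by norm_num, by norm_num, by norm_num, rfl⟩
    have hp1 := e1_sum (hsub1 hpmem)
    have hq1 := e1_sum (hsub1 hqmem)
    have hgp : g.app p ∈ openSegment ℝ c d := himg ▸ Set.mem_image_of_mem _ hpmem
    have hgq : g.app q ∈ openSegment ℝ c d := himg ▸ Set.mem_image_of_mem _ hqmem
    have h1 := e3_sum (hsub3 hgp)
    have h2 := e3_sum (hsub3 hgq)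
    have hpq : p ≠ q := by
      intro h
      apply hab
      have hA := congrArg Prod.fst h
      have hB := congrArg Prod.snd h
      simp only [hpdef, hqdef, Prod.fst_add, Prod.snd_add, Prod.smul_fst, Prod.smul_snd,
        smul_eq_mul] at hA hB
      exact Prod.ext (by linarith) (by linarith)
    have hpq1 : p.1 ≠ q.1 := fun h => hpq (Prod.ext h (by linarith))
    exact key' g p q hp1 hq1 hpq1 h1 h2
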